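/- Let p and q be probability distributions on a finite set 𝒳 with supp(p) ⊆ supp(q), and suppose q has full support. If p_n → q pointwise, then D(p_n ∥ q) / χ²(p_n, q) → 1/(2 ln 2) as n → ∞ (provided χ²(p_n,q) ≠ 0 along the sequence). -/

import Mathlib

open scoped BigOperators Classical

/-- Kullback–Leibler divergence `D(p‖q)` (base-2 logarithm) on a finite alphabet. -/
noncomputable def klDiv {α : Type*} [Fintype α] (p q : α → ℝ) : ℝ :=
  ∑ x, p x * Real.logb 2 (p x / q x)

/-- First marginal of a joint pmf. -/
noncomputable def marg₁ {α β : Type*} [Fintype β] (q : α × β → ℝ) (x : α) : ℝ :=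
  ∑ y, q (x, y)

/-- Second marginal of a joint pmf. -/
noncomputable def marg₂ {α β : Type*} [Fintype α] (q : α × β → ℝ) (y : β) : ℝ :=
  ∑ x, q (x, y)

/-- Mutual information (base-2 logarithm) of a joint pmf on `α × β`. -/
noncomputable def miOfJoint {α β : Type*} [Fintype α] [Fintype β] (q : α × β → ℝ) : ℝ :=
  ∑ x, ∑ y, q (x, y) * Real.logb 2 (q (x, y) / (marg₁ q x * marg₂ q y))

/-- Chi-squared divergence `χ²(p,q)` on a finite alphabet. -/
noncomputable def chiSq {α : Type*} [Fintype α] (p q : α → ℝ) : ℝ :=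
  ∑ x, (p x - q x) ^ 2 / q x

/-- `p` is a probability mass function on the finite type `Ω`. -/
def IsPmf {Ω : Type*} [Fintype Ω] (p : Ω → ℝ) : Prop :=
  (∀ ω, 0 ≤ p ω) ∧ ∑ ω, p ω = 1

lemma aux_u (u : ℝ) (hu : |u| ≤ 1/2) :
    |(1+u) * Real.log (1+u) - u - u^2/2| ≤ 4 * |u|^3 := by
  have h1 : |(-u)| < 1 := by rw [abs_neg]; linarith
  have h := Real.abs_log_sub_add_sum_range_le h1 2
  simp only [Finset.sum_range_succ, Finset.sum_range_zero] at h
  push_cast at h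
  rw [show (1:ℝ) - -u = 1 + u by ring, abs_neg] at h
  have hsum : ((0:ℝ) + (-u)^(0+1)/(0+1) + (-u)^(1+1)/(1+1) + Real.log (1+u)) = Real.log (1+u) - (u - u^2/2) := by ring
  rw [hsum] at h
  set r := Real.log (1+u) - (u - u^2/2) with hr
  have hrb : |r| ≤ 2 * |u|^3 := by
    have h2 : |u|^3 / (1 - |u|) ≤ 2 * |u|^3 := by
      rw [div_le_iff₀ (by linarith [abs_nonneg u] : (0:ℝ) < 1 - |u|)]
      nlinarith [pow_nonneg (abs_nonneg u) 3]
    calc |r| ≤ |u|^(2+1) / (1 - |u|) := h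
      _ ≤ 2 * |u|^3 := by norm_num at h2 ⊢; exact h2
  have key : (1+u) * Real.log (1+u) - u - u^2/2 = -u^3/2 + (1+u)*r := by
    rw [hr]; ring
  rw [key]
  have h3 : |(-u^3/2 + (1+u)*r)| ≤ |u|^3/2 + |(1+u)| * |r| := by
    calc |(-u^3/2 + (1+u)*r)| ≤ |(-u^3/2)| + |(1+u)*r| := abs_add_le _ _
      _ = |u|^3/2 + |(1+u)| * |r| := by rw [abs_mul, abs_div, abs_neg, abs_pow]; norm_num
  have h4 : |1+u| ≤ 3/2 := by
    have := abs_le.mp hu; rw [abs_le]; constructor <;> linarith [this.1, this.2]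
  have h5 : |1+u| * |r| ≤ (3/2) * (2*|u|^3) :=
    mul_le_mul h4 hrb (abs_nonneg r) (by norm_num)
  nlinarith [pow_nonneg (abs_nonneg u) 3]

lemma aux_pt (p q : ℝ) (hq : 0 < q) (hd : |p - q| ≤ q/2) :
    |p * Real.log (p/q) - (p-q) - (p-q)^2/(2*q)| ≤ 4 * q * |(p-q)/q|^3 := by
  set u := (p-q)/q with hu
  have hpq : p / q = 1 + u := by rw [hu, one_add_div hq.ne']; ring
  have hub : |u| ≤ 1/2 := by
    rw [hu, abs_div, abs_of_pos hq, div_le_iff₀ hq]; linarith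
  have hp : p = q * (1 + u) := by rw [← hpq]; field_simp
  have key : p * Real.log (p/q) - (p-q) - (p-q)^2/(2*q)
      = q * ((1+u) * Real.log (1+u) - u - u^2/2) := by
    rw [hpq, hp]; field_simp [hu]; ring
  rw [key, abs_mul, abs_of_pos hq]
  have := aux_u u hub
  calc q * |(1+u) * Real.log (1+u) - u - u^2/2| ≤ q * (4*|u|^3) :=
        mul_le_mul_of_nonneg_left this hq.le
    _ = 4 * q * |u|^3 := by ring


/-- Asymptotic equivalence of KL and chi-squared divergences: if `pₙ → q` pointwise,
with `q` of full support, then `D(pₙ‖q)/χ²(pₙ,q) → 1/(2 ln 2)`. -/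
theorem klDiv_div_chiSq_tendsto {α : Type*} [Fintype α]
    (q : α → ℝ) (hq : IsPmf q) (hqpos : ∀ x, 0 < q x)
    (p : ℕ → α → ℝ) (hp : ∀ n, IsPmf (p n))
    (hconv : ∀ x, Filter.Tendsto (fun n => p n x) Filter.atTop (nhds (q x)))
    (hchi : ∀ n, chiSq (p n) q ≠ 0) :
    Filter.Tendsto (fun n => klDiv (p n) q / chiSq (p n) q) Filter.atTop
      (nhds (1 / (2 * Real.log 2))) := by
  have hlog2 : (0:ℝ) < Real.log 2 := Real.log_pos (by norm_num)
  set g : ℕ → ℝ := fun n => ∑ x, |(p n x - q x) / q x| with hg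
  have hgto : Filter.Tendsto g Filter.atTop (nhds 0) := by
    have h : Filter.Tendsto g Filter.atTop (nhds (∑ x : α, |((q x - q x) / q x)|)) := by
      apply tendsto_finset_sum
      intro x _
      exact (((hconv x).sub_const (q x)).div_const (q x)).abs
    simpa using h
  have hchipos : ∀ n, 0 < chiSq (p n) q := fun n =>
    lt_of_le_of_ne
      (Finset.sum_nonneg fun x _ => div_nonneg (sq_nonneg _) (hqpos x).le)
      (Ne.symm (hchi n))
  have hkl : ∀ n, klDiv (p n) q * Real.log 2 = ∑ x, p n x * Real.log (p n x / q x) := by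
    intro n
    rw [klDiv, Finset.sum_mul]
    refine Finset.sum_congr rfl fun x _ => ?_
    rw [Real.logb]
    field_simp
  have hsum0 : ∀ n, ∑ x, (p n x - q x) = 0 := by
    intro n
    rw [Finset.sum_sub_distrib, (hp n).2, hq.2, sub_self]
  have hx : ∀ x : α, ∀ᶠ n in Filter.atTop, |p n x - q x| ≤ q x / 2 := by
    intro x
    have hnb : ∀ᶠ y in nhds (q x), |y - q x| ≤ q x / 2 := by
      have hb : Metric.closedBall (q x) (q x / 2) ∈ nhds (q x) :=
        Metric.closedBall_mem_nhds _ (half_pos (hqpos x))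
      filter_upwards [hb] with y hy
      simpa [Real.dist_eq] using hy
    exact (hconv x).eventually hnb
  have hev : ∀ᶠ n in Filter.atTop,
      ‖klDiv (p n) q * Real.log 2 / chiSq (p n) q - 1/2‖ ≤ 4 * g n := by
    filter_upwards [Filter.eventually_all.2 hx] with n hn
    set A := ∑ x, p n x * Real.log (p n x / q x) with hA
    have key : A - chiSq (p n) q / 2
        = ∑ x, (p n x * Real.log (p n x / q x) - (p n x - q x)
            - (p n x - q x)^2/(2*q x)) := by
      rw [Finset.sum_sub_distrib, Finset.sum_sub_distrib, hsum0 n, chiSq, Finset.sum_div]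
      congr 1
      · rw [hA, sub_zero]
      · refine Finset.sum_congr rfl fun x _ => ?_
        rw [div_div, mul_comm]
    have hbound : |A - chiSq (p n) q / 2| ≤ 4 * g n * chiSq (p n) q := by
      rw [key]
      calc |∑ x, (p n x * Real.log (p n x / q x) - (p n x - q x)
            - (p n x - q x)^2/(2*q x))|
          ≤ ∑ x, |p n x * Real.log (p n x / q x) - (p n x - q x)
            - (p n x - q x)^2/(2*q x)| := Finset.abs_sum_le_sum_abs _ _
        _ ≤ ∑ x, 4 * g n * ((p n x - q x)^2 / q x) := by
            refine Finset.sum_le_sum fun x _ => ?_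
            have h1 := aux_pt (p n x) (q x) (hqpos x) (hn x)
            refine h1.trans ?_
            have hid : q x * |(p n x - q x)/q x|^3
                = ((p n x - q x)^2/q x) * |(p n x - q x)/q x| := by
              rw [pow_succ, sq_abs, ← mul_assoc]
              congr 1
              field_simp [(hqpos x).ne']
            have hle : |(p n x - q x)/q x| ≤ g n :=
              Finset.single_le_sum (f := fun y => |(p n y - q y)/q y|)
                (fun y _ => abs_nonneg _) (Finset.mem_univ x)
            have hnn : (0:ℝ) ≤ (p n x - q x)^2 / q x :=
              div_nonneg (sq_nonneg _) (hqpos x).le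
            calc 4 * q x * |(p n x - q x)/q x|^3
                = 4 * (((p n x - q x)^2/q x) * |(p n x - q x)/q x|) := by
                  rw [mul_assoc, hid]
              _ ≤ 4 * (((p n x - q x)^2/q x) * g n) := by
                  have := mul_le_mul_of_nonneg_left hle hnn
                  linarith
              _ = 4 * g n * ((p n x - q x)^2 / q x) := by ring
        _ = 4 * g n * chiSq (p n) q := by
            rw [chiSq]
            exact (Finset.mul_sum _ _ _).symm
    have heq : klDiv (p n) q * Real.log 2 / chiSq (p n) q - 1/2
        = (A - chiSq (p n) q / 2) / chiSq (p n) q := by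
      rw [hkl n, ← hA]
      field_simp [hchi n]
    rw [Real.norm_eq_abs, heq, abs_div, abs_of_pos (hchipos n)]
    rw [div_le_iff₀ (hchipos n)]
    exact hbound
  have h4g : Filter.Tendsto (fun n => 4 * g n) Filter.atTop (nhds 0) := by
    have := hgto.const_mul 4
    simpa using this
  have h0 : Filter.Tendsto
      (fun n => klDiv (p n) q * Real.log 2 / chiSq (p n) q - 1/2)
      Filter.atTop (nhds 0) := squeeze_zero_norm' hev h4g
  have h12 : Filter.Tendsto (fun n => klDiv (p n) q * Real.log 2 / chiSq (p n) q)
      Filter.atTop (nhds (1/2)) := by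
    have := h0.add_const (1/2)
    simpa using this
  have heqf : (fun n => klDiv (p n) q / chiSq (p n) q)
      = fun n => (klDiv (p n) q * Real.log 2 / chiSq (p n) q) / Real.log 2 := by
    funext n
    rw [eq_div_iff hlog2.ne', div_mul_eq_mul_div]
  rw [heqf, show (1:ℝ)/(2*Real.log 2) = (1/2)/Real.log 2 by rw [div_div]]
  exact h12.div_const _
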